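/- The operator Π_E := id − Q ∘ d − d ∘ Q is idempotent: Π_E ∘ Π_E = Π_E. -/

import Mathlib

/-- The operator `Π_E := id − Q ∘ d − d ∘ Q` is idempotent:
`Π_E ∘ Π_E = Π_E`. -/
theorem PiE_idempotent
    {V : Type*} [NormedAddCommGroup V] [InnerProductSpace ℝ V] [FiniteDimensional ℝ V]
    (d₀ dinv : V →ₗ[ℝ] V) (hd₀ : d₀ ∘ₗ d₀ = 0)
    (hpinv₁ : (LinearMap.range d₀)ᗮ ≤ LinearMap.ker dinv)
    (hpinv₂ : LinearMap.range dinv ≤ (LinearMap.ker d₀)ᗮ)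
    (hpinv₃ : ∀ v : V, d₀ (dinv v) = (Submodule.orthogonalProjectionOnto (LinearMap.range d₀) v : V))
    (d : V →ₗ[ℝ] V) (hd : d ∘ₗ d = 0)
    (D : V →ₗ[ℝ] V) (hD : D = dinv ∘ₗ (d - d₀))
    (N : ℕ) (hDnil : D ^ (N + 1) = 0)
    (P : V →ₗ[ℝ] V) (hP : P = ∑ k ∈ Finset.range (N + 1), ((-1 : ℝ)) ^ k • D ^ k)
    (Q : V →ₗ[ℝ] V) (hQ : Q = P ∘ₗ dinv)
    (PiE : V →ₗ[ℝ] V) (hPiE : PiE = LinearMap.id - Q ∘ₗ d - d ∘ₗ Q) :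
    PiE ∘ₗ PiE = PiE := by
  -- work in the endomorphism ring
  rw [← Module.End.mul_eq_comp] at hd₀ hd hD hQ ⊢
  rw [← Module.End.mul_eq_comp, ← Module.End.mul_eq_comp, ← Module.End.one_eq_id] at hPiE
  -- range d₀ ≤ ker d₀
  have hrk : LinearMap.range d₀ ≤ LinearMap.ker d₀ := by
    rintro x ⟨y, rfl⟩
    have : (d₀ * d₀) y = 0 := by rw [hd₀]; rfl
    simpa [Module.End.mul_apply] using this
  -- dinv * dinv = 0
  have hhh : dinv * dinv = 0 := by
    ext v
    have h1 : dinv v ∈ (LinearMap.ker d₀)ᗮ := hpinv₂ ⟨v, rfl⟩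
    have h2 : dinv v ∈ (LinearMap.range d₀)ᗮ := Submodule.orthogonal_le hrk h1
    simpa [Module.End.mul_apply] using hpinv₁ h2
  -- dinv * d₀ * dinv = dinv
  have hdh : dinv * d₀ * dinv = dinv := by
    ext v
    have hw : dinv v ∈ (LinearMap.ker d₀)ᗮ := hpinv₂ ⟨v, rfl⟩
    have hw2 : dinv (d₀ (dinv v)) ∈ (LinearMap.ker d₀)ᗮ := hpinv₂ ⟨_, rfl⟩
    have hmem : d₀ (dinv v) ∈ LinearMap.range d₀ := ⟨_, rfl⟩
    have hk : dinv (d₀ (dinv v)) - dinv v ∈ LinearMap.ker d₀ := by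
      rw [LinearMap.mem_ker, map_sub, hpinv₃ (d₀ (dinv v)),
        ← Submodule.starProjection_apply, Submodule.starProjection_eq_self_iff.mpr hmem, sub_self]
    have hcompl : dinv (d₀ (dinv v)) - dinv v ∈ (LinearMap.ker d₀)ᗮ :=
      Submodule.sub_mem _ hw2 hw
    have h0 : dinv (d₀ (dinv v)) - dinv v = 0 := by
      have := (Submodule.orthogonal_disjoint (LinearMap.ker d₀)).le_bot ⟨hk, hcompl⟩
      simpa using this
    have := sub_eq_zero.mp h0
    simpa [Module.End.mul_apply] using this
  -- dinv * D = 0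
  have hhD : dinv * D = 0 := by
    rw [hD, ← mul_assoc, hhh, zero_mul]
  -- P as a geometric series: (1 + D) * P = 1 and P * (1 + D) = 1
  have hPgeom : P = ∑ k ∈ Finset.range (N + 1), (-D) ^ k := by
    rw [hP]
    refine Finset.sum_congr rfl fun k _ => ?_
    rw [show -D = (-1 : ℝ) • D by simp, smul_pow]
  have hDP : (1 + D) * P = 1 := by
    have := mul_geom_sum (-D) (N + 1)
    rw [← hPgeom] at this
    have hneg : (-D) ^ (N + 1) = (-1 : ℝ) ^ (N + 1) • D ^ (N + 1) := by
      rw [show -D = (-1 : ℝ) • D by simp, smul_pow]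
    rw [hneg, hDnil, smul_zero, zero_sub] at this
    calc (1 + D) * P = -((-D - 1) * P) := by noncomm_ring
    _ = 1 := by rw [this]; simp
  have hPD : P * (1 + D) = 1 := by
    have := geom_sum_mul (-D) (N + 1)
    rw [← hPgeom] at this
    have hneg : (-D) ^ (N + 1) = (-1 : ℝ) ^ (N + 1) • D ^ (N + 1) := by
      rw [show -D = (-1 : ℝ) • D by simp, smul_pow]
    rw [hneg, hDnil, smul_zero, zero_sub] at this
    calc P * (1 + D) = -(P * (-D - 1)) := by noncomm_ring
    _ = 1 := by rw [this]; simp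
  -- P = 1 - D * P
  have hP1 : P = 1 - D * P := by
    have h : P + D * P = 1 := by rw [← hDP]; noncomm_ring
    exact eq_sub_of_add_eq h
  -- dinv * P = dinv
  have hhP : dinv * P = dinv := by
    calc dinv * P = dinv * (1 - D * P) := by rw [← hP1]
    _ = dinv - (dinv * D) * P := by noncomm_ring
    _ = dinv := by rw [hhD]; simp
  -- Q * Q = 0
  have hQQ : Q * Q = 0 := by
    rw [hQ]
    calc P * dinv * (P * dinv) = P * (dinv * P) * dinv := by noncomm_ring
    _ = P * (dinv * dinv) := by rw [hhP]; noncomm_ring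
    _ = 0 := by rw [hhh, mul_zero]
  -- dinv * d₀ * D = D
  have hdhD : dinv * d₀ * D = D := by
    rw [hD, ← mul_assoc, hdh]
  -- dinv * d₀ * P = dinv * d₀ - D * P
  have hdP : dinv * d₀ * P = dinv * d₀ - D * P := by
    calc dinv * d₀ * P = dinv * d₀ * (1 - D * P) := by rw [← hP1]
    _ = dinv * d₀ - (dinv * d₀ * D) * P := by noncomm_ring
    _ = dinv * d₀ - D * P := by rw [hdhD]
  -- Q * d * Q = Q
  have hQdQ : Q * d * Q = Q := by
    have hhd : dinv * d = dinv * d₀ + D := by rw [hD]; noncomm_ring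
    rw [hQ]
    calc P * dinv * d * (P * dinv)
        = P * ((dinv * d) * P) * dinv := by noncomm_ring
      _ = P * ((dinv * d₀ + D) * P) * dinv := by rw [hhd]
      _ = P * (dinv * d₀ * P + D * P) * dinv := by noncomm_ring
      _ = P * (dinv * d₀ - D * P + D * P) * dinv := by rw [hdP]
      _ = P * (dinv * d₀ * dinv) := by noncomm_ring
      _ = P * dinv := by rw [mul_assoc] at hdh ⊢; rw [hdh]
  -- conclude
  rw [hPiE]
  have expand : (1 - Q * d - d * Q) * (1 - Q * d - d * Q)
      = 1 - Q * d - d * Q - Q * d + (Q * d * Q) * d + Q * (d * d) * Q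
        - d * Q + d * (Q * Q) * d + d * (Q * d * Q) := by noncomm_ring
  rw [expand, hQdQ, hQQ, hd]
  noncomm_ring
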